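/- Assume h_p ≥ 0 and r_i ≥ r_{i+1} for i = 1,…,N−1. Let d : [0,∞) → ℝ^N be continuous and let (p, Δ) : [0,∞) → ℝ^N × ℝ^N be differentiable and satisfy ṗ(t) = −(B + h_p⟨B⟩)RBᵀ(M⁻¹p(t) − v₀𝟙) + B A Δ(t) + d(t), Δ̇(t) = −Bᵀ(M⁻¹p(t) − v₀𝟙) for all t ≥ 0. Then the system is passive with output y(t) = M⁻¹p(t) − v₀𝟙: for every t ≥ 0, the derivative of t ↦ H(p(t),Δ(t)) satisfies d/dt H(p(t), Δ(t)) ≤ y(t)ᵀd(t). -/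

import Mathlib

open Matrix MeasureTheory Real

/-- The N×N matrix with 1 on the diagonal and -1 on the first superdiagonal. -/
noncomputable def Bmat (N : ℕ) : Matrix (Fin N) (Fin N) ℝ :=
  Matrix.of fun i j => if j = i then 1 else if (j : ℕ) = (i : ℕ) + 1 then -1 else 0

/-- Entrywise absolute value of `Bmat N`. -/
noncomputable def absB (N : ℕ) : Matrix (Fin N) (Fin N) ℝ :=
  Matrix.of fun i j => |Bmat N i j|

/-- Euclidean norm of a vector in ℝ^N. -/
noncomputable def norm2 {N : ℕ} (x : Fin N → ℝ) : ℝ := Real.sqrt (x ⬝ᵥ x)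

/-- The Hamiltonian H(p, Δ) = ½(p − v₀M𝟙)ᵀ M⁻¹ (p − v₀M𝟙) + ½ Δᵀ A Δ. -/
noncomputable def Ham {N : ℕ} (v0 : ℝ) (m a : Fin N → ℝ) (p Δ : Fin N → ℝ) : ℝ :=
  (1/2) * ((p - v0 • (Matrix.diagonal m *ᵥ fun _ => 1)) ⬝ᵥ
      (Matrix.diagonal (fun i => (m i)⁻¹) *ᵥ (p - v0 • (Matrix.diagonal m *ᵥ fun _ => 1)))) +
  (1/2) * (Δ ⬝ᵥ (Matrix.diagonal a *ᵥ Δ))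

/-- "previous entry" of a vector: `predo y j = y (j-1)` for `j ≥ 1`, `0` for `j = 0`. -/
noncomputable def predo {N : ℕ} (y : Fin N → ℝ) (j : Fin N) : ℝ :=
  if h : (j : ℕ) = 0 then 0 else y ⟨(j : ℕ) - 1, by omega⟩

lemma Bt_mulVec_apply {N : ℕ} (y : Fin N → ℝ) (j : Fin N) :
    ((Bmat N)ᵀ *ᵥ y) j = y j - predo y j := by
  have hsplit : ∀ i : Fin N, (Bmat N)ᵀ j i * y i =
      (if i = j then y i else 0) + (if (i : ℕ) + 1 = (j : ℕ) then -y i else 0) := by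
    intro i
    simp only [Bmat, transpose_apply, of_apply]
    rcases eq_or_ne i j with h | h
    · subst h; simp
    · have : ¬ (j = i) := fun hh => h hh.symm
      simp only [this, if_false]
      rcases eq_or_ne ((i:ℕ) + 1) (j:ℕ) with h2 | h2
      · simp [h2.symm, h]
      · have : ¬ ((j:ℕ) = (i:ℕ) + 1) := fun hh => h2 hh.symm
        simp [this, h2, h]
  simp only [mulVec, dotProduct, hsplit, Finset.sum_add_distrib, Finset.sum_ite_eq',
    Finset.mem_univ, if_true]
  congr 1
  by_cases hj : (j : ℕ) = 0
  · rw [Finset.sum_eq_zero]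
    · simp [predo, hj]
    · intro i _
      have : ¬ ((i:ℕ) + 1 = (j:ℕ)) := by omega
      simp [this]
  · have hlt : (j : ℕ) - 1 < N := by omega
    rw [Finset.sum_eq_single (⟨(j:ℕ) - 1, hlt⟩ : Fin N)]
    · have : ((j:ℕ) - 1) + 1 = (j:ℕ) := by omega
      simp [predo, hj, this]
    · intro i _ hi
      have : ¬ ((i:ℕ) + 1 = (j:ℕ)) := by
        intro hh
        apply hi
        apply Fin.ext
        simp; omega
      simp [this]
    · simp

lemma absBt_mulVec_apply {N : ℕ} (y : Fin N → ℝ) (j : Fin N) :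
    ((absB N)ᵀ *ᵥ y) j = y j + predo y j := by
  have hsplit : ∀ i : Fin N, (absB N)ᵀ j i * y i =
      (if i = j then y i else 0) + (if (i : ℕ) + 1 = (j : ℕ) then y i else 0) := by
    intro i
    simp only [absB, Bmat, transpose_apply, of_apply]
    rcases eq_or_ne i j with h | h
    · subst h; simp
    · have : ¬ (j = i) := fun hh => h hh.symm
      simp only [this, if_false]
      rcases eq_or_ne ((i:ℕ) + 1) (j:ℕ) with h2 | h2
      · simp [h2.symm, h]
      · have : ¬ ((j:ℕ) = (i:ℕ) + 1) := fun hh => h2 hh.symm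
        simp [this, h2, h]
  simp only [mulVec, dotProduct, hsplit, Finset.sum_add_distrib, Finset.sum_ite_eq',
    Finset.mem_univ, if_true]
  congr 1
  by_cases hj : (j : ℕ) = 0
  · rw [Finset.sum_eq_zero]
    · simp [predo, hj]
    · intro i _
      have : ¬ ((i:ℕ) + 1 = (j:ℕ)) := by omega
      simp [this]
  · have hlt : (j : ℕ) - 1 < N := by omega
    rw [Finset.sum_eq_single (⟨(j:ℕ) - 1, hlt⟩ : Fin N)]
    · have : ((j:ℕ) - 1) + 1 = (j:ℕ) := by omega
      simp [predo, hj, this]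
    · intro i _ hi
      have : ¬ ((i:ℕ) + 1 = (j:ℕ)) := by
        intro hh
        apply hi
        apply Fin.ext
        simp; omega
      simp [this]
    · simp

/-- The telescoping positivity: `∑ r j (y j + y (j-1)) (y j − y (j-1)) ≥ 0`. -/
lemma telescope_pos {N : ℕ} (hN : 1 ≤ N) (r : Fin N → ℝ) (hr : ∀ i, 0 < r i)
    (hrdec : ∀ i : Fin N, ∀ h : (i : ℕ) + 1 < N, r ⟨(i : ℕ) + 1, h⟩ ≤ r i)
    (y : Fin N → ℝ) :
    0 ≤ ((absB N)ᵀ *ᵥ y) ⬝ᵥ (Matrix.diagonal r *ᵥ ((Bmat N)ᵀ *ᵥ y)) := by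
  have hsum : ((absB N)ᵀ *ᵥ y) ⬝ᵥ (Matrix.diagonal r *ᵥ ((Bmat N)ᵀ *ᵥ y)) =
      ∑ j : Fin N, r j * ((y j)^2 - (predo y j)^2) := by
    simp only [dotProduct, mulVec_diagonal, Bt_mulVec_apply, absBt_mulVec_apply]
    apply Finset.sum_congr rfl
    intro j _
    ring
  rw [hsum]
  -- convert to sums over ℕ
  set R : ℕ → ℝ := fun k => if h : k < N then r ⟨k, h⟩ else 0 with hR
  set Y : ℕ → ℝ := fun k => if h : k < N then y ⟨k, h⟩ else 0 with hY
  have hconv : ∑ j : Fin N, r j * ((y j)^2 - (predo y j)^2) =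
      ∑ k ∈ Finset.range N, R k * (Y k)^2 -
      ∑ k ∈ Finset.range N, R k * (if k = 0 then 0 else Y (k-1))^2 := by
    rw [← Finset.sum_sub_distrib]
    rw [Finset.sum_range fun k => R k * Y k ^ 2 - R k * (if k = 0 then 0 else Y (k-1))^2]
    apply Finset.sum_congr rfl
    intro j _
    have hj : (j : ℕ) < N := j.isLt
    by_cases h0 : (j : ℕ) = 0
    · simp only [hR, hY, dif_pos hj, Fin.eta, predo, dif_pos h0, if_pos h0]
      ring
    · have hlt : (j : ℕ) - 1 < N := by omega
      simp only [hR, hY, dif_pos hj, Fin.eta, predo, dif_neg h0, if_neg h0, dif_pos hlt]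
      ring
  rw [hconv]
  obtain ⟨M, rfl⟩ : ∃ M, N = M + 1 := ⟨N - 1, by omega⟩
  rw [Finset.sum_range_succ' (fun k => R k * (if k = 0 then 0 else Y (k-1))^2) M]
  rw [Finset.sum_range_succ (fun k => R k * (Y k)^2) M]
  have hterm : ∀ k ∈ Finset.range M, R (k+1) * (if k+1 = 0 then (0:ℝ) else Y (k+1-1))^2
      = R (k+1) * Y k ^ 2 := by
    intro k _; simp
  rw [Finset.sum_congr rfl hterm]
  have h0 : R 0 * (if (0:ℕ) = 0 then (0:ℝ) else Y (0-1))^2 = 0 := by simp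
  rw [h0, add_zero]
  have hpos1 : 0 ≤ ∑ k ∈ Finset.range M, (R k - R (k+1)) * Y k ^ 2 := by
    apply Finset.sum_nonneg
    intro k hk
    rw [Finset.mem_range] at hk
    apply mul_nonneg _ (sq_nonneg _)
    have h1 : k < M + 1 := by omega
    have h2 : k + 1 < M + 1 := by omega
    have := hrdec ⟨k, h1⟩ h2
    simp only [hR, h1, h2, dif_pos, sub_nonneg]
    exact this
  have hpos2 : 0 ≤ R M * Y M ^ 2 := by
    apply mul_nonneg _ (sq_nonneg _)
    have hM : M < M + 1 := by omega
    simp only [hR, hM, dif_pos]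
    exact (hr _).le
  have hid : ∑ k ∈ Finset.range M, (R k - R (k+1)) * Y k ^ 2
      = ∑ k ∈ Finset.range M, R k * Y k ^ 2 - ∑ k ∈ Finset.range M, R (k+1) * Y k ^ 2 := by
    rw [← Finset.sum_sub_distrib]
    exact Finset.sum_congr rfl fun k _ => by ring
  linarith

/-- The damping positivity. -/
lemma damping_pos {N : ℕ} (hN : 1 ≤ N) (hp : ℝ) (hhp : 0 ≤ hp) (r : Fin N → ℝ)
    (hr : ∀ i, 0 < r i)
    (hrdec : ∀ i : Fin N, ∀ h : (i : ℕ) + 1 < N, r ⟨(i : ℕ) + 1, h⟩ ≤ r i)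
    (y : Fin N → ℝ) :
    0 ≤ y ⬝ᵥ (((Bmat N + hp • absB N) * Matrix.diagonal r * (Bmat N)ᵀ) *ᵥ y) := by
  have hexp : y ⬝ᵥ (((Bmat N + hp • absB N) * Matrix.diagonal r * (Bmat N)ᵀ) *ᵥ y) =
      ((Bmat N)ᵀ *ᵥ y) ⬝ᵥ (Matrix.diagonal r *ᵥ ((Bmat N)ᵀ *ᵥ y)) +
      hp * (((absB N)ᵀ *ᵥ y) ⬝ᵥ (Matrix.diagonal r *ᵥ ((Bmat N)ᵀ *ᵥ y))) := by
    rw [← mulVec_mulVec, ← mulVec_mulVec, add_mulVec, smul_mulVec, dotProduct_add,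
      dotProduct_smul, smul_eq_mul]
    congr 1
    · rw [dotProduct_mulVec, ← mulVec_transpose]
    · congr 1
      rw [dotProduct_mulVec, ← mulVec_transpose]
  rw [hexp]
  apply add_nonneg
  · simp only [dotProduct, mulVec_diagonal]
    apply Finset.sum_nonneg
    intro j _
    have : ((Bmat N)ᵀ *ᵥ y) j * (r j * ((Bmat N)ᵀ *ᵥ y) j) = r j * (((Bmat N)ᵀ *ᵥ y) j)^2 := by
      ring
    rw [this]
    exact mul_nonneg (hr j).le (sq_nonneg _)
  · exact mul_nonneg hhp (telescope_pos hN r hr hrdec y)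

lemma Ham_eq_sum {N : ℕ} (v0 : ℝ) (m a : Fin N → ℝ) (P D : Fin N → ℝ) :
    Ham v0 m a P D = (∑ i : Fin N, (1/2) * (m i)⁻¹ * (P i - v0 * m i)^2)
      + ∑ i : Fin N, (1/2) * a i * (D i)^2 := by
  simp only [Ham, dotProduct, mulVec_diagonal, Pi.sub_apply, Pi.smul_apply, smul_eq_mul,
    Finset.mul_sum]
  congr 1 <;> apply Finset.sum_congr rfl <;> intro i _ <;> ring

/-- passivity with output y = M⁻¹p − v₀𝟙:
the derivative of the Hamiltonian along trajectories is bounded by yᵀd. -/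
theorem stmt_2 (N : ℕ) (hN : 1 ≤ N) (hp : ℝ) (hhp : 0 ≤ hp) (v0 : ℝ)
    (r a m : Fin N → ℝ) (hr : ∀ i, 0 < r i) (ha : ∀ i, 0 < a i) (hm : ∀ i, 0 < m i)
    (hrdec : ∀ i : Fin N, ∀ h : (i : ℕ) + 1 < N, r ⟨(i : ℕ) + 1, h⟩ ≤ r i)
    (d : ℝ → Fin N → ℝ) (hdcont : Continuous d)
    (p Δ : ℝ → Fin N → ℝ)
    (hdyn : ∀ t : ℝ, 0 ≤ t →
      HasDerivAt p
        (-(((Bmat N + hp • absB N) * Matrix.diagonal r * (Bmat N)ᵀ) *ᵥ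
            (Matrix.diagonal (fun i => (m i)⁻¹) *ᵥ p t - v0 • (fun _ : Fin N => (1:ℝ))))
          + (Bmat N * Matrix.diagonal a) *ᵥ Δ t + d t) t ∧
      HasDerivAt Δ
        (-((Bmat N)ᵀ *ᵥ (Matrix.diagonal (fun i => (m i)⁻¹) *ᵥ p t - v0 • (fun _ : Fin N => (1:ℝ))))) t)
    (t : ℝ) (ht : 0 ≤ t) :
    deriv (fun s => Ham v0 m a (p s) (Δ s)) t ≤
      (Matrix.diagonal (fun i => (m i)⁻¹) *ᵥ p t - v0 • (fun _ : Fin N => (1:ℝ))) ⬝ᵥ d t := by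
  obtain ⟨hP, hD⟩ := hdyn t ht
  set y : Fin N → ℝ := Matrix.diagonal (fun i => (m i)⁻¹) *ᵥ p t - v0 • (fun _ : Fin N => (1:ℝ))
    with hy
  set p' : Fin N → ℝ := -(((Bmat N + hp • absB N) * Matrix.diagonal r * (Bmat N)ᵀ) *ᵥ y)
      + (Bmat N * Matrix.diagonal a) *ᵥ Δ t + d t with hp'
  set Δ' : Fin N → ℝ := -((Bmat N)ᵀ *ᵥ y) with hΔ'
  -- componentwise derivatives
  have hPi : ∀ i, HasDerivAt (fun s => p s i) (p' i) t := fun i => hasDerivAt_pi.mp hP i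
  have hDi : ∀ i, HasDerivAt (fun s => Δ s i) (Δ' i) t := fun i => hasDerivAt_pi.mp hD i
  -- derivative of the Hamiltonian along the trajectory
  have hH : HasDerivAt (fun s => Ham v0 m a (p s) (Δ s))
      ((∑ i : Fin N, (m i)⁻¹ * (p t i - v0 * m i) * p' i)
        + ∑ i : Fin N, a i * Δ t i * Δ' i) t := by
    have h1 : HasDerivAt (fun s => ∑ i : Fin N, (1/2) * (m i)⁻¹ * (p s i - v0 * m i)^2)
        (∑ i : Fin N, (m i)⁻¹ * (p t i - v0 * m i) * p' i) t := by
      have := HasDerivAt.fun_sum (u := Finset.univ)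
        (A := fun i s => (1/2) * (m i)⁻¹ * (p s i - v0 * m i)^2)
        (A' := fun i => (m i)⁻¹ * (p t i - v0 * m i) * p' i)
        (fun i _ => by
          have h := (((hPi i).sub_const (v0 * m i)).fun_pow 2).const_mul ((1/2) * (m i)⁻¹)
          convert h using 1
          rfl
          ring)
      exact this
    have h2 : HasDerivAt (fun s => ∑ i : Fin N, (1/2) * a i * (Δ s i)^2)
        (∑ i : Fin N, a i * Δ t i * Δ' i) t := by
      have := HasDerivAt.fun_sum (u := Finset.univ)
        (A := fun i s => (1/2) * a i * (Δ s i)^2)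
        (A' := fun i => a i * Δ t i * Δ' i)
        (fun i _ => by
          have h := ((hDi i).fun_pow 2).const_mul ((1/2) * a i)
          convert h using 1
          rfl
          ring)
      exact this
    have heq : (fun s => Ham v0 m a (p s) (Δ s))
        = fun s => (∑ i : Fin N, (1/2) * (m i)⁻¹ * (p s i - v0 * m i)^2)
          + ∑ i : Fin N, (1/2) * a i * (Δ s i)^2 := by
      funext s
      exact Ham_eq_sum v0 m a (p s) (Δ s)
    rw [heq]
    exact h1.add h2
  rw [hH.deriv]
  -- identify the two sums with dot products
  have hy_i : ∀ i, (m i)⁻¹ * (p t i - v0 * m i) = y i := by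
    intro i
    have hmi : m i ≠ 0 := (hm i).ne'
    simp only [hy, Pi.sub_apply, mulVec_diagonal, Pi.smul_apply, smul_eq_mul, mul_one]
    rw [mul_sub]
    congr 1
    rw [mul_comm, mul_assoc, mul_inv_cancel₀ hmi, mul_one]
  have hsum1 : (∑ i : Fin N, (m i)⁻¹ * (p t i - v0 * m i) * p' i) = y ⬝ᵥ p' := by
    simp only [dotProduct]
    exact Finset.sum_congr rfl fun i _ => by rw [hy_i i]
  have hsum2 : (∑ i : Fin N, a i * Δ t i * Δ' i) = (Matrix.diagonal a *ᵥ Δ t) ⬝ᵥ Δ' := by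
    simp only [dotProduct, mulVec_diagonal]
  rw [hsum1, hsum2]
  -- cancellation of coupling terms
  have hcancel : (Matrix.diagonal a *ᵥ Δ t) ⬝ᵥ Δ' = -(y ⬝ᵥ ((Bmat N * Matrix.diagonal a) *ᵥ Δ t)) := by
    rw [hΔ', dotProduct_neg]
    congr 1
    rw [mulVec_transpose, ← mulVec_mulVec, dotProduct_mulVec y (Bmat N)]
    exact dotProduct_comm _ _
  have hexp : y ⬝ᵥ p' = -(y ⬝ᵥ (((Bmat N + hp • absB N) * Matrix.diagonal r * (Bmat N)ᵀ) *ᵥ y))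
      + y ⬝ᵥ ((Bmat N * Matrix.diagonal a) *ᵥ Δ t) + y ⬝ᵥ d t := by
    rw [hp', dotProduct_add, dotProduct_add, dotProduct_neg]
  rw [hcancel, hexp]
  have := damping_pos hN hp hhp r hr hrdec y
  linarith
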